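/- arXiv:1103.3197 — 2 statements merged into one kernel-verified Lean document; each statement's English description precedes it below -/
import Mathlib

section
/- For each fixed y ∈ ℝ, the function G(x,y,t) = (4πt)^{-1/2} e^{-(x−y+ct)²/(4t)}/(1+e^{cy}) + (4πt)^{-1/2} e^{-(x−y−ct)²/(4t)}/(1+e^{-cy}) + (c/4)[errfn((y−x+ct)/√(4t)) − errfn((y−x−ct)/√(4t))]·sech²(cy/2) satisfies, as a function of (x,t) on ℝ × (0,∞), the PDE G_t = G_xx − c·tanh(cx/2)·G_x. -/
open MeasureTheory Real Filter

noncomputable def errfn (z : ℝ) : ℝ :=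
  (Real.sqrt Real.pi)⁻¹ * ∫ s in Set.Iio z, Real.exp (-s ^ 2)

noncomputable def psi (c y : ℝ) : ℝ := (1 / Real.cosh (c * y / 2)) ^ 2

noncomputable def Grn (c x y t : ℝ) : ℝ :=
  (Real.sqrt (4 * Real.pi * t))⁻¹ * Real.exp (-(x - y + c * t) ^ 2 / (4 * t)) /
      (1 + Real.exp (c * y))
    + (Real.sqrt (4 * Real.pi * t))⁻¹ * Real.exp (-(x - y - c * t) ^ 2 / (4 * t)) /
      (1 + Real.exp (-(c * y)))
    + c / 4 *
      (errfn ((y - x + c * t) / Real.sqrt (4 * t)) -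
        errfn ((y - x - c * t) / Real.sqrt (4 * t))) * psi c y

noncomputable def eFun (c x t : ℝ) : ℝ :=
  c / 4 *
    (errfn ((x + c * t) / Real.sqrt (4 * t)) - errfn ((x - c * t) / Real.sqrt (4 * t)))

lemma errfn_hasDerivAt (z : ℝ) :
    HasDerivAt errfn ((Real.sqrt Real.pi)⁻¹ * Real.exp (-z ^ 2)) z := by
  have hint : Integrable (fun s : ℝ => Real.exp (-s ^ 2)) := by
    simpa using integrable_exp_neg_mul_sq (by norm_num : (0:ℝ) < 1)
  have hce : Continuous fun s : ℝ => Real.exp (-s ^ 2) := by continuity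
  have key : ∀ w : ℝ, errfn w = (Real.sqrt Real.pi)⁻¹ *
      ((∫ s in Set.Iic (0:ℝ), Real.exp (-s ^ 2)) + ∫ s in (0:ℝ)..w, Real.exp (-s^2)) := by
    intro w
    rw [errfn]
    congr 1
    rw [← intervalIntegral.integral_Iic_sub_Iic (hint.integrableOn) (hint.integrableOn),
      MeasureTheory.integral_Iic_eq_integral_Iio, MeasureTheory.integral_Iic_eq_integral_Iio]
    ring
  have h1 : HasDerivAt (fun w => ∫ s in (0:ℝ)..w, Real.exp (-s^2)) (Real.exp (-z^2)) z :=
    intervalIntegral.integral_hasDerivAt_right (hce.intervalIntegrable 0 z)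
      (hce.stronglyMeasurableAtFilter _ _) hce.continuousAt
  have h2 := ((h1.const_add (∫ s in Set.Iic (0:ℝ), Real.exp (-s ^ 2))).const_mul ((Real.sqrt Real.pi)⁻¹))
  refine HasDerivAt.congr_of_eventuallyEq (by simpa using h2) ?_
  filter_upwards with w using (key w)

set_option maxHeartbeats 2000000 in
theorem greens_function_solves_linear_pde (c : ℝ) (hc : 0 < c) (y : ℝ) :
    ∀ x t : ℝ, 0 < t →
      deriv (fun τ => Grn c x y τ) t =
        deriv (deriv (fun ξ => Grn c ξ y t)) x
          - c * Real.tanh (c * x / 2) * deriv (fun ξ => Grn c ξ y t) x := by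
  intro x t ht
  have ht' : t ≠ 0 := ne_of_gt ht
  have hs0 : Real.sqrt t ≠ 0 := ne_of_gt (Real.sqrt_pos.mpr ht)
  have hp0 : Real.sqrt Real.pi ≠ 0 := ne_of_gt (Real.sqrt_pos.mpr Real.pi_pos)
  have hs2 : Real.sqrt t ^ 2 = t := Real.sq_sqrt ht.le
  have hp2 : Real.sqrt Real.pi ^ 2 = Real.pi := Real.sq_sqrt Real.pi_pos.le
  have ha : Real.sqrt (4 * t) = 2 * Real.sqrt t := by
    rw [show 4 * t = (2 * Real.sqrt t) ^ 2 by rw [mul_pow, hs2]; norm_num]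
    exact Real.sqrt_sq (by positivity)
  have hS : Real.sqrt (4 * Real.pi * t) = 2 * Real.sqrt Real.pi * Real.sqrt t := by
    rw [show 4 * Real.pi * t = (2 * Real.sqrt Real.pi * Real.sqrt t) ^ 2 by
      rw [mul_pow, mul_pow, hp2, hs2]; ring]
    exact Real.sqrt_sq (by positivity)
  have ha0 : Real.sqrt (4 * t) ≠ 0 := by rw [ha]; positivity
  have hArg1 : ∀ ξ : ℝ, -((y - ξ + c * t) / Real.sqrt (4 * t)) ^ 2
      = -(ξ - y - c * t) ^ 2 / (4 * t) := by
    intro ξ; rw [ha, div_pow, mul_pow, hs2]; ring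
  have hArg2 : ∀ ξ : ℝ, -((y - ξ - c * t) / Real.sqrt (4 * t)) ^ 2
      = -(ξ - y + c * t) ^ 2 / (4 * t) := by
    intro ξ; rw [ha, div_pow, mul_pow, hs2]; ring
  -- spatial first derivative, at every point ξ
  have hx1 : ∀ ξ : ℝ, HasDerivAt (fun ξ => Grn c ξ y t)
      ((Real.sqrt (4 * Real.pi * t))⁻¹ * Real.exp (-(ξ - y + c * t) ^ 2 / (4 * t)) *
          (-(ξ - y + c * t) / (2 * t)) / (1 + Real.exp (c * y))
        + (Real.sqrt (4 * Real.pi * t))⁻¹ * Real.exp (-(ξ - y - c * t) ^ 2 / (4 * t)) *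
          (-(ξ - y - c * t) / (2 * t)) / (1 + Real.exp (-(c * y)))
        + c / 4 * ((Real.sqrt (4 * Real.pi * t))⁻¹ * Real.exp (-(ξ - y + c * t) ^ 2 / (4 * t))
            - (Real.sqrt (4 * Real.pi * t))⁻¹ * Real.exp (-(ξ - y - c * t) ^ 2 / (4 * t)))
          * psi c y) ξ := by
    intro ξ
    have hlin1 : HasDerivAt (fun ξ : ℝ => ξ - y + c * t) 1 ξ :=
      ((hasDerivAt_id ξ).sub_const y).add_const (c * t)
    have hlin2 : HasDerivAt (fun ξ : ℝ => ξ - y - c * t) 1 ξ :=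
      ((hasDerivAt_id ξ).sub_const y).sub_const (c * t)
    have hg1 := (((hlin1.pow 2).neg).div_const (4 * t)).exp
    have hg2 := (((hlin2.pow 2).neg).div_const (4 * t)).exp
    have p1 : HasDerivAt (fun ξ : ℝ => (Real.sqrt (4 * Real.pi * t))⁻¹ *
        Real.exp (-(ξ - y + c * t) ^ 2 / (4 * t)) / (1 + Real.exp (c * y)))
        ((Real.sqrt (4 * Real.pi * t))⁻¹ * Real.exp (-(ξ - y + c * t) ^ 2 / (4 * t)) *
          (-(ξ - y + c * t) / (2 * t)) / (1 + Real.exp (c * y))) ξ := by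
      refine HasDerivAt.congr_deriv ((hg1.const_mul ((Real.sqrt (4 * Real.pi * t))⁻¹)).div_const
        (1 + Real.exp (c * y))) (Eq.symm ?_)
      simp only [Pi.neg_apply, Pi.pow_apply, Pi.div_apply]
      field_simp
      ring
    have p2 : HasDerivAt (fun ξ : ℝ => (Real.sqrt (4 * Real.pi * t))⁻¹ *
        Real.exp (-(ξ - y - c * t) ^ 2 / (4 * t)) / (1 + Real.exp (-(c * y))))
        ((Real.sqrt (4 * Real.pi * t))⁻¹ * Real.exp (-(ξ - y - c * t) ^ 2 / (4 * t)) *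
          (-(ξ - y - c * t) / (2 * t)) / (1 + Real.exp (-(c * y)))) ξ := by
      refine HasDerivAt.congr_deriv ((hg2.const_mul ((Real.sqrt (4 * Real.pi * t))⁻¹)).div_const
        (1 + Real.exp (-(c * y)))) (Eq.symm ?_)
      simp only [Pi.neg_apply, Pi.pow_apply, Pi.div_apply]
      field_simp
      ring
    have hi1 : HasDerivAt (fun ξ : ℝ => (y - ξ + c * t) / Real.sqrt (4 * t))
        (-1 / Real.sqrt (4 * t)) ξ :=
      (((hasDerivAt_id ξ).const_sub y).add_const (c * t)).div_const _
    have hi2 : HasDerivAt (fun ξ : ℝ => (y - ξ - c * t) / Real.sqrt (4 * t))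
        (-1 / Real.sqrt (4 * t)) ξ :=
      (((hasDerivAt_id ξ).const_sub y).sub_const (c * t)).div_const _
    have he1 : HasDerivAt (fun ξ : ℝ => errfn ((y - ξ + c * t) / Real.sqrt (4 * t)))
        (-((Real.sqrt (4 * Real.pi * t))⁻¹ *
          Real.exp (-(ξ - y - c * t) ^ 2 / (4 * t)))) ξ := by
      have h := (errfn_hasDerivAt ((y - ξ + c * t) / Real.sqrt (4 * t))).comp ξ hi1
      refine HasDerivAt.congr_deriv (h) (Eq.symm ?_)
      rw [hArg1 ξ, hS, ha]
      field_simp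
    have he2 : HasDerivAt (fun ξ : ℝ => errfn ((y - ξ - c * t) / Real.sqrt (4 * t)))
        (-((Real.sqrt (4 * Real.pi * t))⁻¹ *
          Real.exp (-(ξ - y + c * t) ^ 2 / (4 * t)))) ξ := by
      have h := (errfn_hasDerivAt ((y - ξ - c * t) / Real.sqrt (4 * t))).comp ξ hi2
      refine HasDerivAt.congr_deriv (h) (Eq.symm ?_)
      rw [hArg2 ξ, hS, ha]
      field_simp
    have p3 : HasDerivAt (fun ξ : ℝ => c / 4 *
        (errfn ((y - ξ + c * t) / Real.sqrt (4 * t)) -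
          errfn ((y - ξ - c * t) / Real.sqrt (4 * t))) * psi c y)
        (c / 4 * ((Real.sqrt (4 * Real.pi * t))⁻¹ * Real.exp (-(ξ - y + c * t) ^ 2 / (4 * t))
            - (Real.sqrt (4 * Real.pi * t))⁻¹ * Real.exp (-(ξ - y - c * t) ^ 2 / (4 * t)))
          * psi c y) ξ := by
      refine HasDerivAt.congr_deriv ((((he1.sub he2).const_mul (c / 4)).mul_const (psi c y))) (Eq.symm ?_)
      ring
    exact ((p1.add p2).add p3)
  
  have hGxval : deriv (fun ξ => Grn c ξ y t) x =
      (Real.sqrt (4 * Real.pi * t))⁻¹ * Real.exp (-(x - y + c * t) ^ 2 / (4 * t)) *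
          (-(x - y + c * t) / (2 * t)) / (1 + Real.exp (c * y))
        + (Real.sqrt (4 * Real.pi * t))⁻¹ * Real.exp (-(x - y - c * t) ^ 2 / (4 * t)) *
          (-(x - y - c * t) / (2 * t)) / (1 + Real.exp (-(c * y)))
        + c / 4 * ((Real.sqrt (4 * Real.pi * t))⁻¹ * Real.exp (-(x - y + c * t) ^ 2 / (4 * t))
            - (Real.sqrt (4 * Real.pi * t))⁻¹ * Real.exp (-(x - y - c * t) ^ 2 / (4 * t)))
          * psi c y := (hx1 x).deriv
  have hderiv1 : deriv (fun ξ => Grn c ξ y t) = fun ξ =>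
      (Real.sqrt (4 * Real.pi * t))⁻¹ * Real.exp (-(ξ - y + c * t) ^ 2 / (4 * t)) *
          (-(ξ - y + c * t) / (2 * t)) / (1 + Real.exp (c * y))
        + (Real.sqrt (4 * Real.pi * t))⁻¹ * Real.exp (-(ξ - y - c * t) ^ 2 / (4 * t)) *
          (-(ξ - y - c * t) / (2 * t)) / (1 + Real.exp (-(c * y)))
        + c / 4 * ((Real.sqrt (4 * Real.pi * t))⁻¹ * Real.exp (-(ξ - y + c * t) ^ 2 / (4 * t))
            - (Real.sqrt (4 * Real.pi * t))⁻¹ * Real.exp (-(ξ - y - c * t) ^ 2 / (4 * t)))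
          * psi c y := funext fun ξ => (hx1 ξ).deriv
  -- second spatial derivative at x
  have hx2 : HasDerivAt (fun ξ =>
      (Real.sqrt (4 * Real.pi * t))⁻¹ * Real.exp (-(ξ - y + c * t) ^ 2 / (4 * t)) *
          (-(ξ - y + c * t) / (2 * t)) / (1 + Real.exp (c * y))
        + (Real.sqrt (4 * Real.pi * t))⁻¹ * Real.exp (-(ξ - y - c * t) ^ 2 / (4 * t)) *
          (-(ξ - y - c * t) / (2 * t)) / (1 + Real.exp (-(c * y)))
        + c / 4 * ((Real.sqrt (4 * Real.pi * t))⁻¹ * Real.exp (-(ξ - y + c * t) ^ 2 / (4 * t))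
            - (Real.sqrt (4 * Real.pi * t))⁻¹ * Real.exp (-(ξ - y - c * t) ^ 2 / (4 * t)))
          * psi c y)
      ((Real.sqrt (4 * Real.pi * t))⁻¹ * Real.exp (-(x - y + c * t) ^ 2 / (4 * t)) *
          ((x - y + c * t) ^ 2 / (4 * t ^ 2) - 1 / (2 * t)) / (1 + Real.exp (c * y))
        + (Real.sqrt (4 * Real.pi * t))⁻¹ * Real.exp (-(x - y - c * t) ^ 2 / (4 * t)) *
          ((x - y - c * t) ^ 2 / (4 * t ^ 2) - 1 / (2 * t)) / (1 + Real.exp (-(c * y)))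
        + c / 4 * ((Real.sqrt (4 * Real.pi * t))⁻¹ * Real.exp (-(x - y + c * t) ^ 2 / (4 * t))
              * (-(x - y + c * t) / (2 * t))
            - (Real.sqrt (4 * Real.pi * t))⁻¹ * Real.exp (-(x - y - c * t) ^ 2 / (4 * t))
              * (-(x - y - c * t) / (2 * t)))
          * psi c y) x := by
    have hlin1 : HasDerivAt (fun ξ : ℝ => ξ - y + c * t) 1 x :=
      ((hasDerivAt_id x).sub_const y).add_const (c * t)
    have hlin2 : HasDerivAt (fun ξ : ℝ => ξ - y - c * t) 1 x :=
      ((hasDerivAt_id x).sub_const y).sub_const (c * t)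
    have hg1 := (((hlin1.pow 2).neg).div_const (4 * t)).exp.const_mul
      ((Real.sqrt (4 * Real.pi * t))⁻¹)
    have hg2 := (((hlin2.pow 2).neg).div_const (4 * t)).exp.const_mul
      ((Real.sqrt (4 * Real.pi * t))⁻¹)
    have hL1 : HasDerivAt (fun ξ : ℝ => -(ξ - y + c * t) / (2 * t)) (-1 / (2 * t)) x :=
      (hlin1.neg).div_const (2 * t)
    have hL2 : HasDerivAt (fun ξ : ℝ => -(ξ - y - c * t) / (2 * t)) (-1 / (2 * t)) x :=
      (hlin2.neg).div_const (2 * t)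
    have p1 := (hg1.mul hL1).div_const (1 + Real.exp (c * y))
    have p2 := (hg2.mul hL2).div_const (1 + Real.exp (-(c * y)))
    have p3 := ((hg1.sub hg2).const_mul (c / 4)).mul_const (psi c y)
    refine HasDerivAt.congr_deriv ((p1.add p2).add p3) (Eq.symm ?_)
    simp only [Pi.neg_apply, Pi.pow_apply, Pi.div_apply]
    field_simp
    ring
  have hGxx : deriv (deriv (fun ξ => Grn c ξ y t)) x =
      (Real.sqrt (4 * Real.pi * t))⁻¹ * Real.exp (-(x - y + c * t) ^ 2 / (4 * t)) *
          ((x - y + c * t) ^ 2 / (4 * t ^ 2) - 1 / (2 * t)) / (1 + Real.exp (c * y))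
        + (Real.sqrt (4 * Real.pi * t))⁻¹ * Real.exp (-(x - y - c * t) ^ 2 / (4 * t)) *
          ((x - y - c * t) ^ 2 / (4 * t ^ 2) - 1 / (2 * t)) / (1 + Real.exp (-(c * y)))
        + c / 4 * ((Real.sqrt (4 * Real.pi * t))⁻¹ * Real.exp (-(x - y + c * t) ^ 2 / (4 * t))
              * (-(x - y + c * t) / (2 * t))
            - (Real.sqrt (4 * Real.pi * t))⁻¹ * Real.exp (-(x - y - c * t) ^ 2 / (4 * t))
              * (-(x - y - c * t) / (2 * t)))
          * psi c y := by
    rw [hderiv1]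
    exact hx2.deriv
  -- time derivative pieces
  have hRt : HasDerivAt (fun τ : ℝ => (Real.sqrt (4 * Real.pi * τ))⁻¹)
      (-(1 / (2 * t)) * (Real.sqrt (4 * Real.pi * t))⁻¹) t := by
    have hu : HasDerivAt (fun τ : ℝ => 4 * Real.pi * τ) (4 * Real.pi) t := by
      simpa using (hasDerivAt_id t).const_mul (4 * Real.pi)
    have hsq := (Real.hasDerivAt_sqrt (by positivity : 4 * Real.pi * t ≠ 0)).comp t hu
    simp only [Function.comp_def] at hsq
    have hinv := hsq.inv (by positivity : Real.sqrt (4 * Real.pi * t) ≠ 0)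
    refine HasDerivAt.congr_deriv (hinv) (Eq.symm ?_)
    rw [hS]
    generalize hq : Real.sqrt t = s at hs2 ⊢
    generalize hqp : Real.sqrt Real.pi = p at hp2 ⊢
    have hsne : s ≠ 0 := hq ▸ hs0
    have hpne : p ≠ 0 := hqp ▸ hp0
    rw [← hs2, ← hp2]
    field_simp
    ring
  have hsq4 : HasDerivAt (fun τ : ℝ => Real.sqrt (4 * τ)) ((Real.sqrt t)⁻¹) t := by
    have hu : HasDerivAt (fun τ : ℝ => 4 * τ) 4 t := by
      simpa using (hasDerivAt_id t).const_mul (4 : ℝ)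
    have hsq := (Real.hasDerivAt_sqrt (by positivity : 4 * t ≠ 0)).comp t hu
    simp only [Function.comp_def] at hsq
    refine HasDerivAt.congr_deriv (hsq) (Eq.symm ?_)
    rw [ha]
    field_simp
    ring
  have hd4 : HasDerivAt (fun τ : ℝ => 4 * τ) 4 t := by
    simpa using (hasDerivAt_id t).const_mul (4 : ℝ)
  have hlin1t : HasDerivAt (fun τ : ℝ => x - y + c * τ) c t := by
    simpa using ((hasDerivAt_id t).const_mul c).const_add (x - y)
  have hlin2t : HasDerivAt (fun τ : ℝ => x - y - c * τ) (-c) t := by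
    simpa using ((hasDerivAt_id t).const_mul c).const_sub (x - y)
  have hexp1t : HasDerivAt (fun τ : ℝ => Real.exp (-(x - y + c * τ) ^ 2 / (4 * τ)))
      (Real.exp (-(x - y + c * t) ^ 2 / (4 * t)) *
        (-(c * (x - y + c * t)) / (2 * t) + (x - y + c * t) ^ 2 / (4 * t ^ 2))) t := by
    have h := (((hlin1t.pow 2).neg).div hd4 (by positivity : (4:ℝ) * t ≠ 0)).exp
    refine HasDerivAt.congr_deriv (h) (Eq.symm ?_)
    simp only [Pi.neg_apply, Pi.pow_apply, Pi.div_apply]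
    field_simp
    ring
  have hexp2t : HasDerivAt (fun τ : ℝ => Real.exp (-(x - y - c * τ) ^ 2 / (4 * τ)))
      (Real.exp (-(x - y - c * t) ^ 2 / (4 * t)) *
        (c * (x - y - c * t) / (2 * t) + (x - y - c * t) ^ 2 / (4 * t ^ 2))) t := by
    have h := (((hlin2t.pow 2).neg).div hd4 (by positivity : (4:ℝ) * t ≠ 0)).exp
    refine HasDerivAt.congr_deriv (h) (Eq.symm ?_)
    simp only [Pi.neg_apply, Pi.pow_apply, Pi.div_apply]
    field_simp
    ring
  have p1c : HasDerivAt (fun τ : ℝ => (Real.sqrt (4 * Real.pi * τ))⁻¹ *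
      Real.exp (-(x - y + c * τ) ^ 2 / (4 * τ)) / (1 + Real.exp (c * y)))
      ((Real.sqrt (4 * Real.pi * t))⁻¹ * Real.exp (-(x - y + c * t) ^ 2 / (4 * t)) *
        (-(1 / (2 * t)) - c * (x - y + c * t) / (2 * t) + (x - y + c * t) ^ 2 / (4 * t ^ 2))
        / (1 + Real.exp (c * y))) t := by
    refine HasDerivAt.congr_deriv ((hRt.mul hexp1t).div_const (1 + Real.exp (c * y))) (Eq.symm ?_)
    ring
  have p2c : HasDerivAt (fun τ : ℝ => (Real.sqrt (4 * Real.pi * τ))⁻¹ *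
      Real.exp (-(x - y - c * τ) ^ 2 / (4 * τ)) / (1 + Real.exp (-(c * y))))
      ((Real.sqrt (4 * Real.pi * t))⁻¹ * Real.exp (-(x - y - c * t) ^ 2 / (4 * t)) *
        (-(1 / (2 * t)) + c * (x - y - c * t) / (2 * t) + (x - y - c * t) ^ 2 / (4 * t ^ 2))
        / (1 + Real.exp (-(c * y)))) t := by
    refine HasDerivAt.congr_deriv ((hRt.mul hexp2t).div_const (1 + Real.exp (-(c * y)))) (Eq.symm ?_)
    ring
  have hn1t : HasDerivAt (fun τ : ℝ => y - x + c * τ) c t := by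
    simpa using ((hasDerivAt_id t).const_mul c).const_add (y - x)
  have hn2t : HasDerivAt (fun τ : ℝ => y - x - c * τ) (-c) t := by
    simpa using ((hasDerivAt_id t).const_mul c).const_sub (y - x)
  have hu1t := hn1t.div hsq4 ha0
  have hu2t := hn2t.div hsq4 ha0
  have he1t : HasDerivAt (fun τ : ℝ => errfn ((y - x + c * τ) / Real.sqrt (4 * τ)))
      ((Real.sqrt (4 * Real.pi * t))⁻¹ * Real.exp (-(x - y - c * t) ^ 2 / (4 * t)) *
        (c - (y - x + c * t) / (2 * t))) t := by
    have h := (errfn_hasDerivAt ((y - x + c * t) / Real.sqrt (4 * t))).comp t hu1t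
    refine HasDerivAt.congr_deriv (h) (Eq.symm ?_)
    rw [hArg1 x, hS, ha]
    generalize hq : Real.sqrt t = s at hs2 ⊢
    have hsne : s ≠ 0 := hq ▸ hs0
    rw [← hs2]
    field_simp
  have he2t : HasDerivAt (fun τ : ℝ => errfn ((y - x - c * τ) / Real.sqrt (4 * τ)))
      ((Real.sqrt (4 * Real.pi * t))⁻¹ * Real.exp (-(x - y + c * t) ^ 2 / (4 * t)) *
        (-c - (y - x - c * t) / (2 * t))) t := by
    have h := (errfn_hasDerivAt ((y - x - c * t) / Real.sqrt (4 * t))).comp t hu2t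
    refine HasDerivAt.congr_deriv (h) (Eq.symm ?_)
    rw [hArg2 x, hS, ha]
    generalize hq : Real.sqrt t = s at hs2 ⊢
    have hsne : s ≠ 0 := hq ▸ hs0
    rw [← hs2]
    field_simp
  have p3c := ((he1t.sub he2t).const_mul (c / 4)).mul_const (psi c y)
  have hGT : HasDerivAt (fun τ => Grn c x y τ)
      ((Real.sqrt (4 * Real.pi * t))⁻¹ * Real.exp (-(x - y + c * t) ^ 2 / (4 * t)) *
        (-(1 / (2 * t)) - c * (x - y + c * t) / (2 * t) + (x - y + c * t) ^ 2 / (4 * t ^ 2))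
        / (1 + Real.exp (c * y))
      + (Real.sqrt (4 * Real.pi * t))⁻¹ * Real.exp (-(x - y - c * t) ^ 2 / (4 * t)) *
        (-(1 / (2 * t)) + c * (x - y - c * t) / (2 * t) + (x - y - c * t) ^ 2 / (4 * t ^ 2))
        / (1 + Real.exp (-(c * y)))
      + c / 4 * ((Real.sqrt (4 * Real.pi * t))⁻¹ * Real.exp (-(x - y - c * t) ^ 2 / (4 * t)) *
            (c - (y - x + c * t) / (2 * t))
          - (Real.sqrt (4 * Real.pi * t))⁻¹ * Real.exp (-(x - y + c * t) ^ 2 / (4 * t)) *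
            (-c - (y - x - c * t) / (2 * t))) * psi c y) t :=
    (p1c.add p2c).add p3c
  rw [hGT.deriv, hGxx, hGxval]
  -- final algebra
  have hSne : Real.sqrt (4 * Real.pi * t) ≠ 0 := by positivity
  have hcosh : Real.cosh (c * y / 2) =
      (Real.exp (c * y / 2) + (Real.exp (c * y / 2))⁻¹) / 2 := by
    rw [Real.cosh_eq, Real.exp_neg]
  have htanh : Real.tanh (c * x / 2) =
      (Real.exp (c * x / 2) - (Real.exp (c * x / 2))⁻¹) /
        (Real.exp (c * x / 2) + (Real.exp (c * x / 2))⁻¹) := by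
    rw [Real.tanh_eq_sinh_div_cosh, Real.sinh_eq, Real.cosh_eq, Real.exp_neg]
    have hAB : Real.exp (c * x / 2) + (Real.exp (c * x / 2))⁻¹ ≠ 0 := by positivity
    field_simp
  have hey : Real.exp (c * y) = Real.exp (c * y / 2) * Real.exp (c * y / 2) := by
    rw [← Real.exp_add]; ring_nf
  have hex : Real.exp (c * x) = Real.exp (c * x / 2) * Real.exp (c * x / 2) := by
    rw [← Real.exp_add]; ring_nf
  have heyn : Real.exp (-(c * y)) = (Real.exp (c * y / 2) * Real.exp (c * y / 2))⁻¹ := by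
    rw [Real.exp_neg, hey]
  have hEa : Real.exp (-(x - y + c * t) ^ 2 / (4 * t)) =
      Real.exp (-(x - y - c * t) ^ 2 / (4 * t)) *
        (Real.exp (c * y / 2) * Real.exp (c * y / 2) /
          (Real.exp (c * x / 2) * Real.exp (c * x / 2))) := by
    rw [show -(x - y + c * t) ^ 2 / (4 * t) = -(x - y - c * t) ^ 2 / (4 * t) + (c * y - c * x)
        from by field_simp; ring,
      Real.exp_add, Real.exp_sub, hey, hex]
  have hQ0 : Real.exp (c * y / 2) ≠ 0 := Real.exp_ne_zero _
  have hP0 : Real.exp (c * x / 2) ≠ 0 := Real.exp_ne_zero _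
  have h1 : (1:ℝ) + Real.exp (c * y / 2) * Real.exp (c * y / 2) ≠ 0 := by positivity
  have h2 : (1:ℝ) + (Real.exp (c * y / 2) * Real.exp (c * y / 2))⁻¹ ≠ 0 := by positivity
  have h3 : Real.exp (c * x / 2) + (Real.exp (c * x / 2))⁻¹ ≠ 0 := by positivity
  have h4 : Real.exp (c * y / 2) + (Real.exp (c * y / 2))⁻¹ ≠ 0 := by positivity
  rw [psi, hcosh, htanh, hey, heyn, hEa]
  field_simp
  ring
end

section
/- There is C > 0 such that for all x ∈ ℝ and t > 0: |e(x,t)·(c/4 − e(x,t))| ≤ C(e^{-(x+ct)²/(8t)} + e^{-(x−ct)²/(8t)}), where e(x,t) = (c/4)[errfn((x+ct)/√(4t)) − errfn((x−ct)/√(4t))]. -/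
open MeasureTheory Real Filter

lemma gauss_int : Integrable (fun s : ℝ => Real.exp (-s ^ 2)) := by
  have := integrable_exp_neg_mul_sq (by norm_num : (0:ℝ) < 1)
  simpa using this

lemma gauss_int_half : Integrable (fun s : ℝ => Real.exp (-s ^ 2 / 2)) := by
  have := integrable_exp_neg_mul_sq (by norm_num : (0:ℝ) < 1/2)
  convert this using 2 with s
  ring_nf

lemma gauss_total : ∫ s : ℝ, Real.exp (-s ^ 2) = Real.sqrt Real.pi := by
  have := integral_gaussian (1 : ℝ)
  simpa using this

lemma gauss_half_total : ∫ s : ℝ, Real.exp (-s ^ 2 / 2) = Real.sqrt (2 * Real.pi) := by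
  have := integral_gaussian (1/2 : ℝ)
  rw [show Real.pi / (1/2) = 2 * Real.pi by ring] at this
  rw [← this]
  congr 1; ext s; ring_nf

lemma sqrt_pi_pos : 0 < Real.sqrt Real.pi := Real.sqrt_pos.mpr Real.pi_pos

lemma errfn_nonneg (z : ℝ) : 0 ≤ errfn z := by
  unfold errfn
  apply mul_nonneg (inv_nonneg.mpr (Real.sqrt_nonneg _))
  apply integral_nonneg
  intro s; exact (Real.exp_pos _).le

lemma errfn_mono : Monotone errfn := by
  intro a b hab
  unfold errfn
  apply mul_le_mul_of_nonneg_left _ (inv_nonneg.mpr (Real.sqrt_nonneg _))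
  apply setIntegral_mono_set (gauss_int.integrableOn)
  · filter_upwards with s using (Real.exp_pos _).le
  · exact HasSubset.Subset.eventuallyLE (Set.Iio_subset_Iio hab)

lemma errfn_le_one (z : ℝ) : errfn z ≤ 1 := by
  unfold errfn
  rw [inv_mul_le_iff₀ sqrt_pi_pos, mul_one, ← gauss_total]
  apply setIntegral_le_integral gauss_int
  filter_upwards with s using (Real.exp_pos _).le

lemma errfn_tail_lower (z : ℝ) (hz : z ≤ 0) :
    errfn z ≤ Real.sqrt 2 * Real.exp (-z ^ 2 / 2) := by
  unfold errfn
  rw [inv_mul_le_iff₀ sqrt_pi_pos]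
  have h1 : ∫ s in Set.Iio z, Real.exp (-s ^ 2) ≤
      ∫ s in Set.Iio z, Real.exp (-z ^ 2 / 2) * Real.exp (-s ^ 2 / 2) := by
    apply setIntegral_mono_on gauss_int.integrableOn
      ((gauss_int_half.const_mul _).integrableOn) measurableSet_Iio
    intro s hs
    rw [← Real.exp_add]
    apply Real.exp_le_exp.mpr
    have hs' : s < z := hs
    nlinarith
  have h2 : ∫ s in Set.Iio z, Real.exp (-z ^ 2 / 2) * Real.exp (-s ^ 2 / 2) ≤
      Real.exp (-z ^ 2 / 2) * Real.sqrt (2 * Real.pi) := by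
    rw [integral_const_mul, ← gauss_half_total]
    apply mul_le_mul_of_nonneg_left _ (Real.exp_pos _).le
    apply setIntegral_le_integral gauss_int_half
    filter_upwards with s using (Real.exp_pos _).le
  have h3 : Real.exp (-z ^ 2 / 2) * Real.sqrt (2 * Real.pi) =
      Real.sqrt 2 * Real.exp (-z ^ 2 / 2) * Real.sqrt Real.pi := by
    rw [Real.sqrt_mul (by norm_num : (0:ℝ) ≤ 2)]
    ring
  linarith

lemma errfn_tail_upper (z : ℝ) (hz : 0 ≤ z) :
    1 - errfn z ≤ Real.sqrt 2 * Real.exp (-z ^ 2 / 2) := by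
  have hcompl : errfn z + (Real.sqrt Real.pi)⁻¹ * ∫ s in Set.Ici z, Real.exp (-s ^ 2) = 1 := by
    unfold errfn
    rw [← mul_add, intervalIntegral.integral_Iio_add_Ici gauss_int.integrableOn gauss_int.integrableOn,
      gauss_total, inv_mul_cancel₀ sqrt_pi_pos.ne']
  have h1 : ∫ s in Set.Ici z, Real.exp (-s ^ 2) ≤
      ∫ s in Set.Ici z, Real.exp (-z ^ 2 / 2) * Real.exp (-s ^ 2 / 2) := by
    apply setIntegral_mono_on gauss_int.integrableOn
      ((gauss_int_half.const_mul _).integrableOn) measurableSet_Ici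
    intro s hs
    rw [← Real.exp_add]
    apply Real.exp_le_exp.mpr
    have hs' : z ≤ s := hs
    nlinarith
  have h2 : ∫ s in Set.Ici z, Real.exp (-z ^ 2 / 2) * Real.exp (-s ^ 2 / 2) ≤
      Real.exp (-z ^ 2 / 2) * Real.sqrt (2 * Real.pi) := by
    rw [integral_const_mul, ← gauss_half_total]
    apply mul_le_mul_of_nonneg_left _ (Real.exp_pos _).le
    apply setIntegral_le_integral gauss_int_half
    filter_upwards with s using (Real.exp_pos _).le
  have h3 : 1 - errfn z ≤ (Real.sqrt Real.pi)⁻¹ *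
      (Real.exp (-z ^ 2 / 2) * Real.sqrt (2 * Real.pi)) := by
    rw [← hcompl]
    have := mul_le_mul_of_nonneg_left (h1.trans h2) (inv_nonneg.mpr (Real.sqrt_nonneg Real.pi))
    linarith
  have h4 : (Real.sqrt Real.pi)⁻¹ * (Real.exp (-z ^ 2 / 2) * Real.sqrt (2 * Real.pi)) =
      Real.sqrt 2 * Real.exp (-z ^ 2 / 2) := by
    rw [Real.sqrt_mul (by norm_num : (0:ℝ) ≤ 2)]
    field_simp
  linarith [h3, h4.le, h4.ge]

lemma key_prod_bound (u v : ℝ) (hvu : v ≤ u) :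
    |(errfn u - errfn v) * (1 - (errfn u - errfn v))| ≤
      Real.sqrt 2 * (Real.exp (-u ^ 2 / 2) + Real.exp (-v ^ 2 / 2)) := by
  have hmono := errfn_mono hvu
  have hu1 := errfn_le_one u
  have hv0 := errfn_nonneg v
  have hu0 := errfn_nonneg u
  have hv1 := errfn_le_one v
  set D := errfn u - errfn v with hD
  have hD0 : 0 ≤ D := sub_nonneg.mpr hmono
  have hD1 : D ≤ 1 := by linarith
  rw [abs_of_nonneg (mul_nonneg hD0 (by linarith))]
  have hs2 : (0:ℝ) ≤ Real.sqrt 2 := Real.sqrt_nonneg 2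
  have he1 : (0:ℝ) < Real.exp (-u ^ 2 / 2) := Real.exp_pos _
  have he2 : (0:ℝ) < Real.exp (-v ^ 2 / 2) := Real.exp_pos _
  rcases le_or_gt u 0 with hu | hu
  · -- u ≤ 0 : D ≤ errfn u ≤ √2 e^{-u²/2}
    have h1 : D ≤ Real.sqrt 2 * Real.exp (-u ^ 2 / 2) :=
      le_trans (by linarith) (errfn_tail_lower u hu)
    nlinarith [sq_nonneg D, mul_nonneg hs2 he2.le]
  · rcases le_or_gt 0 v with hv | hv
    · -- 0 ≤ v : D ≤ 1 - errfn v ≤ √2 e^{-v²/2}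
      have h1 : D ≤ Real.sqrt 2 * Real.exp (-v ^ 2 / 2) :=
        le_trans (by linarith) (errfn_tail_upper v hv)
      nlinarith [sq_nonneg D, mul_nonneg hs2 he1.le]
    · -- v < 0 < u : 1 - D ≤ √2 e^{-u²/2} + √2 e^{-v²/2}
      have h1 := errfn_tail_upper u hu.le
      have h2 := errfn_tail_lower v hv.le
      have h3 : 1 - D ≤ Real.sqrt 2 * Real.exp (-u ^ 2 / 2) +
          Real.sqrt 2 * Real.exp (-v ^ 2 / 2) := by
        have : 1 - D = (1 - errfn u) + errfn v := by rw [hD]; ring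
        linarith
      nlinarith [sq_nonneg (1 - D)]

theorem e_times_complement_estimate (c : ℝ) (hc : 0 < c) :
    ∃ C > 0, ∀ x t : ℝ, 0 < t →
      |eFun c x t * (c / 4 - eFun c x t)| ≤
        C * (Real.exp (-(x + c * t) ^ 2 / (8 * t)) +
          Real.exp (-(x - c * t) ^ 2 / (8 * t))) := by
  refine ⟨Real.sqrt 2 * (c / 4) ^ 2, by positivity, ?_⟩
  intro x t ht
  have hst : (0:ℝ) < Real.sqrt (4 * t) := Real.sqrt_pos.mpr (by linarith)
  set A := (x + c * t) / Real.sqrt (4 * t) with hA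
  set B := (x - c * t) / Real.sqrt (4 * t) with hB
  have htne : t ≠ 0 := ht.ne'
  have hBA : B ≤ A := by
    rw [hA, hB]
    exact (div_le_div_iff_of_pos_right hst).mpr (by nlinarith)
  have hkey := key_prod_bound A B hBA
  have hA2 : -A ^ 2 / 2 = -(x + c * t) ^ 2 / (8 * t) := by
    rw [hA, div_pow, Real.sq_sqrt (by linarith : (0:ℝ) ≤ 4 * t), neg_div, neg_div,
      neg_inj, div_div]
    congr 1
    ring
  have hB2 : -B ^ 2 / 2 = -(x - c * t) ^ 2 / (8 * t) := by
    rw [hB, div_pow, Real.sq_sqrt (by linarith : (0:ℝ) ≤ 4 * t), neg_div, neg_div,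
      neg_inj, div_div]
    congr 1
    ring
  have hefun : eFun c x t * (c / 4 - eFun c x t) =
      (c / 4) ^ 2 * ((errfn A - errfn B) * (1 - (errfn A - errfn B))) := by
    unfold eFun
    rw [← hA, ← hB]
    ring
  rw [hefun, abs_mul, abs_of_nonneg (by positivity : (0:ℝ) ≤ (c / 4) ^ 2),
    ← hA2, ← hB2]
  calc (c / 4) ^ 2 * |(errfn A - errfn B) * (1 - (errfn A - errfn B))|
      ≤ (c / 4) ^ 2 * (Real.sqrt 2 * (Real.exp (-A ^ 2 / 2) + Real.exp (-B ^ 2 / 2))) :=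
        mul_le_mul_of_nonneg_left hkey (by positivity)
    _ = Real.sqrt 2 * (c / 4) ^ 2 * (Real.exp (-A ^ 2 / 2) + Real.exp (-B ^ 2 / 2)) := by
        ring
end
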